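/- Let G be a graph with at least one edge, A its adjacency matrix, and L = D − A its Laplacian, where D is the diagonal degree matrix. Then χ(G) ≥ 1 + μ(A)/(μ(L) − μ(A)), where μ denotes the largest eigenvalue. -/

import Mathlib

open Matrix SimpleGraph

noncomputable def maxEigR {n : ℕ} (A : Matrix (Fin n) (Fin n) ℝ) : ℝ :=
  sSup (spectrum ℝ A)


section aux
variable {n : ℕ} {A : Matrix (Fin n) (Fin n) ℝ}

lemma eig_le_maxEig (hA : A.IsHermitian) (i : Fin n) : hA.eigenvalues i ≤ maxEigR A := by
  apply le_csSup
  · exact (Set.finite_range hA.eigenvalues).bddAbove.mono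
      (by rw [hA.spectrum_real_eq_range_eigenvalues])
  · exact hA.eigenvalues_mem_spectrum_real i

lemma maxEig_mem (hA : A.IsHermitian) (hn : 0 < n) : ∃ i, hA.eigenvalues i = maxEigR A := by
  haveI : Nonempty (Fin n) := ⟨⟨0, hn⟩⟩
  have : maxEigR A ∈ Set.range hA.eigenvalues := by
    rw [← hA.spectrum_real_eq_range_eigenvalues]
    exact Set.Nonempty.csSup_mem
      (by rw [hA.spectrum_real_eq_range_eigenvalues]; exact Set.range_nonempty _)
      (by rw [hA.spectrum_real_eq_range_eigenvalues]; exact Set.finite_range _)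
  exact this

/-- `c • 1 - A` is PSD when `c` dominates the eigenvalues. -/
lemma psd_smul_sub (hA : A.IsHermitian) (c : ℝ) (hc : ∀ i, hA.eigenvalues i ≤ c) :
    Matrix.PosSemidef (c • (1 : Matrix (Fin n) (Fin n) ℝ) - A) := by
  classical
  set U : Matrix (Fin n) (Fin n) ℝ := (hA.eigenvectorUnitary : Matrix (Fin n) (Fin n) ℝ) with hUdef
  have hU : U * star U = 1 := Matrix.mem_unitaryGroup_iff.mp hA.eigenvectorUnitary.2
  have key : c • (1 : Matrix (Fin n) (Fin n) ℝ) - A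
      = U * Matrix.diagonal (fun i => c - hA.eigenvalues i) * star U := by
    have hd : Matrix.diagonal (fun i => c - hA.eigenvalues i)
        = c • (1 : Matrix (Fin n) (Fin n) ℝ) - Matrix.diagonal (RCLike.ofReal ∘ hA.eigenvalues) := by
      ext i j
      simp only [Matrix.sub_apply, Matrix.smul_apply, Matrix.one_apply, Matrix.diagonal_apply,
        Function.comp_apply, RCLike.ofReal_real_eq_id, id_eq, smul_eq_mul]
      split <;> simp
    rw [hd, Matrix.mul_sub, Matrix.sub_mul, Matrix.mul_smul, Matrix.mul_one,
      Matrix.smul_mul, hU]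
    conv_lhs => rw [hA.spectral_theorem]
    rw [Unitary.conjStarAlgAut_apply]
  rw [key]
  exact (Matrix.posSemidef_diagonal_iff.mpr fun i => sub_nonneg.mpr (hc i)).mul_mul_conjTranspose_same U

/-- Rayleigh upper bound. -/
lemma rayleigh_le (hA : A.IsHermitian) (c : ℝ) (hc : ∀ i, hA.eigenvalues i ≤ c)
    (x : Fin n → ℝ) : x ⬝ᵥ A *ᵥ x ≤ c * (x ⬝ᵥ x) := by
  have h := (psd_smul_sub hA c hc).dotProduct_mulVec_nonneg x
  simp only [star_trivial, RCLike.re_to_real] at h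
  rw [Matrix.sub_mulVec, dotProduct_sub, Matrix.smul_mulVec, Matrix.one_mulVec,
    dotProduct_smul, smul_eq_mul] at h
  linarith

lemma dot_symm (M : Matrix (Fin n) (Fin n) ℝ) (hM : Mᵀ = M) (x y : Fin n → ℝ) :
    x ⬝ᵥ M *ᵥ y = y ⬝ᵥ M *ᵥ x := by
  rw [Matrix.dotProduct_mulVec, ← Matrix.mulVec_transpose, hM, dotProduct_comm]

lemma dot_mulVec_sum {k : ℕ} (M : Matrix (Fin n) (Fin n) ℝ) (x : Fin n → ℝ)
    (f : Fin k → Fin n → ℝ) :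
    x ⬝ᵥ M *ᵥ (∑ i, f i) = ∑ i, x ⬝ᵥ M *ᵥ f i := by
  have h1 : M *ᵥ (∑ i, f i) = ∑ i, M *ᵥ f i := by
    have := map_sum (Matrix.mulVecLin M) f Finset.univ
    simpa only [Matrix.mulVecLin_apply] using this
  rw [h1]
  simp only [dotProduct, Finset.sum_apply, Finset.mul_sum]
  exact Finset.sum_comm

lemma quad_expand (M : Matrix (Fin n) (Fin n) ℝ) (hM : Mᵀ = M) (x y : Fin n → ℝ) (c : ℝ) :
    (x - c • y) ⬝ᵥ M *ᵥ (x - c • y)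
      = x ⬝ᵥ M *ᵥ x - 2 * c * (x ⬝ᵥ M *ᵥ y) + c ^ 2 * (y ⬝ᵥ M *ᵥ y) := by
  have hsym : y ⬝ᵥ M *ᵥ x = x ⬝ᵥ M *ᵥ y := dot_symm M hM y x
  rw [Matrix.mulVec_sub, Matrix.mulVec_smul, dotProduct_sub, sub_dotProduct,
    sub_dotProduct, dotProduct_smul, smul_dotProduct,
    smul_dotProduct, dotProduct_smul, hsym]
  simp only [smul_eq_mul]
  ring

end aux

/-- `χ(G) ≥ 1 + μ(A)/(μ(L) − μ(A))` for a graph with an edge, stated via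
`k`-colorability for every `k`. -/
theorem stmt7 {n : ℕ} (G : SimpleGraph (Fin n)) [DecidableRel G.Adj]
    (hedge : ∃ u v, G.Adj u v) :
    ∀ k : ℕ, G.Colorable k →
      (k : ℝ) ≥ 1 + maxEigR (G.adjMatrix ℝ) /
        (maxEigR (G.lapMatrix ℝ) - maxEigR (G.adjMatrix ℝ)) := by
  classical
  intro k hcol
  obtain ⟨u, v, huv⟩ := hedge
  have hn : 0 < n := u.pos
  set A := G.adjMatrix ℝ with hAdef
  set L := G.lapMatrix ℝ with hLdef
  set D := G.degMatrix ℝ with hDdef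
  have hA : A.IsHermitian := by
    rw [Matrix.IsHermitian, Matrix.conjTranspose_eq_transpose_of_trivial]
    exact G.isSymm_adjMatrix
  have hL : L.IsHermitian := by
    rw [Matrix.IsHermitian, Matrix.conjTranspose_eq_transpose_of_trivial]
    exact G.isSymm_lapMatrix (R := ℝ)
  set μA := maxEigR A with hμA
  set μL := maxEigR L with hμL
  -- μA ≥ 1
  have hμA1 : (1 : ℝ) ≤ μA := by
    set y : Fin n → ℝ := Pi.single u 1 + Pi.single v 1 with hy
    have hne : u ≠ v := G.ne_of_adj huv
    have h1 : y ⬝ᵥ A *ᵥ y = 2 := by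
      rw [hy, Matrix.mulVec_add, Matrix.mulVec_single, Matrix.mulVec_single,
        add_dotProduct, dotProduct_add, dotProduct_add,
        single_dotProduct, single_dotProduct,
        single_dotProduct, single_dotProduct]
      simp [hAdef, huv, huv.symm, G.adjMatrix_apply, hne, hne.symm]
      norm_num
    have h2 : y ⬝ᵥ y = 2 := by
      rw [hy, add_dotProduct, dotProduct_add, dotProduct_add,
        single_dotProduct, single_dotProduct,
        single_dotProduct, single_dotProduct]
      simp [Pi.single_apply, hne, hne.symm]
      norm_num
    have := rayleigh_le hA μA (eig_le_maxEig hA) y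
    rw [h1, h2] at this
    linarith
  have hμA0 : (0 : ℝ) < μA := lt_of_lt_of_le one_pos hμA1
  -- coloring
  obtain ⟨C⟩ := hcol
  have hk2 : 2 ≤ k := by
    by_contra h
    push_neg at h
    interval_cases k
    · exact (C u).elim0
    · exact C.valid huv (Subsingleton.elim _ _)
  have hk2' : (2 : ℝ) ≤ (k : ℝ) := by exact_mod_cast hk2
  -- eigenvector of A
  obtain ⟨i0, hi0⟩ := maxEig_mem hA hn
  set x : Fin n → ℝ := ⇑(hA.eigenvectorBasis i0) with hx
  have hAx : A *ᵥ x = μA • x := by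
    rw [hx, hA.mulVec_eigenvectorBasis, hi0]
  set s : ℝ := x ⬝ᵥ x with hs
  have hxAx : x ⬝ᵥ A *ᵥ x = μA * s := by
    rw [hAx, dotProduct_smul, smul_eq_mul, hs]
  have hxAx' : μA = x ⬝ᵥ A *ᵥ x := by
    have h := hA.eigenvalues_eq i0
    rw [hi0] at h
    simpa [hx] using h
  have hs1 : s = 1 := by
    have h : μA = μA * s := hxAx'.trans hxAx
    have h2 : μA * s - μA * 1 = 0 := by linarith
    rw [← mul_sub] at h2
    rcases mul_eq_zero.mp h2 with h3 | h3
    · exact absurd h3 (ne_of_gt hμA0)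
    · linarith
  have hs0 : 0 < s := by rw [hs1]; norm_num
  -- color classes
  set xi : Fin k → Fin n → ℝ := fun i w => if C w = i then x w else 0 with hxi
  have hsum : ∑ i, xi i = x := by
    funext w
    rw [Finset.sum_apply]
    simp only [hxi]
    rw [Finset.sum_ite_eq Finset.univ (C w) (fun _ => x w)]
    simp
  have hAxi : ∀ i, xi i ⬝ᵥ A *ᵥ xi i = 0 := by
    intro i
    apply Finset.sum_eq_zero
    intro a _
    by_cases ha : C a = i
    · have : (A *ᵥ xi i) a = 0 := by
        have hm : (A *ᵥ xi i) a = ∑ b, A a b * xi i b := by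
          simp [Matrix.mulVec, dotProduct]
        rw [hm]
        apply Finset.sum_eq_zero
        intro b _
        by_cases hb : C b = i
        · have hnadj : ¬ G.Adj a b := fun hadj => C.valid hadj (ha.trans hb.symm)
          simp [hAdef, G.adjMatrix_apply, hnadj]
        · simp [hxi, hb]
      rw [this, mul_zero]
    · simp [hxi, ha]
  have hsq : ∀ w i, xi i w * xi i w = if C w = i then x w * x w else 0 := by
    intro w i
    simp only [hxi]
    split <;> simp
  have hssum : ∑ i, xi i ⬝ᵥ xi i = s := by
    rw [hs]
    simp only [dotProduct]
    rw [Finset.sum_comm]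
    apply Finset.sum_congr rfl
    intro w _
    rw [Finset.sum_congr rfl fun i _ => hsq w i,
      Finset.sum_ite_eq Finset.univ (C w) (fun _ => x w * x w)]
    simp
  have hdiagsum : ∀ (d : Fin n → ℝ),
      ∑ i, xi i ⬝ᵥ (Matrix.diagonal d) *ᵥ xi i = x ⬝ᵥ (Matrix.diagonal d) *ᵥ x := by
    intro d
    have expand : ∀ y : Fin n → ℝ,
        y ⬝ᵥ (Matrix.diagonal d) *ᵥ y = ∑ w, d w * (y w * y w) := by
      intro y
      simp only [dotProduct, Matrix.mulVec_diagonal]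
      exact Finset.sum_congr rfl fun w _ => by ring
    simp only [expand]
    rw [Finset.sum_comm]
    apply Finset.sum_congr rfl
    intro w _
    rw [← Finset.mul_sum, Finset.sum_congr rfl fun i _ => by rw [hsq w i],
      Finset.sum_ite_eq Finset.univ (C w) (fun _ => x w * x w)]
    simp
  have hDsum : ∑ i, xi i ⬝ᵥ D *ᵥ xi i = x ⬝ᵥ D *ᵥ x := hdiagsum _
  -- the PSD matrix M
  set M : Matrix (Fin n) (Fin n) ℝ := μL • (1 : Matrix (Fin n) (Fin n) ℝ) - L with hM
  have hMpsd : M.PosSemidef := psd_smul_sub hL μL (eig_le_maxEig hL)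
  have hMsymm : Mᵀ = M := by
    have := hMpsd.1
    rwa [Matrix.IsHermitian, Matrix.conjTranspose_eq_transpose_of_trivial] at this
  have hq : ∀ y, 0 ≤ y ⬝ᵥ M *ᵥ y := by
    intro y
    have := hMpsd.dotProduct_mulVec_nonneg y
    simpa using this
  have hqform : ∀ y : Fin n → ℝ,
      y ⬝ᵥ M *ᵥ y = μL * (y ⬝ᵥ y) - (y ⬝ᵥ D *ᵥ y) + (y ⬝ᵥ A *ᵥ y) := by
    intro y
    rw [hM, Matrix.sub_mulVec, dotProduct_sub, Matrix.smul_mulVec,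
      Matrix.one_mulVec, dotProduct_smul, smul_eq_mul]
    have : L = D - A := rfl
    rw [this, Matrix.sub_mulVec, dotProduct_sub]
    ring
  -- main inequality
  have hlin : ∑ i, x ⬝ᵥ M *ᵥ xi i = x ⬝ᵥ M *ᵥ x := by
    rw [← dot_mulVec_sum M x xi, hsum]
  have hmain : 0 ≤ ∑ i, (x - (k:ℝ) • xi i) ⬝ᵥ M *ᵥ (x - (k:ℝ) • xi i) :=
    Finset.sum_nonneg fun i _ => hq _
  have hexp : ∑ i, (x - (k:ℝ) • xi i) ⬝ᵥ M *ᵥ (x - (k:ℝ) • xi i)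
      = (k:ℝ) * (x ⬝ᵥ M *ᵥ x) - 2 * (k:ℝ) * (x ⬝ᵥ M *ᵥ x)
        + (k:ℝ)^2 * ∑ i, xi i ⬝ᵥ M *ᵥ xi i := by
    rw [Finset.sum_congr rfl fun i _ => quad_expand M hMsymm x (xi i) (k:ℝ)]
    rw [Finset.sum_add_distrib, Finset.sum_sub_distrib, ← Finset.mul_sum, hlin,
      ← Finset.mul_sum, Finset.sum_const, Finset.card_univ, Fintype.card_fin,
      nsmul_eq_mul]
  -- compute quadratic forms
  set dd : ℝ := x ⬝ᵥ D *ᵥ x with hdd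
  have hqx : x ⬝ᵥ M *ᵥ x = μL * s - dd + μA * s := by
    rw [hqform, hxAx, hs, hdd]
  have hqxi : ∑ i, xi i ⬝ᵥ M *ᵥ xi i = μL * s - dd := by
    rw [Finset.sum_congr rfl fun i _ => hqform (xi i)]
    rw [Finset.sum_add_distrib, Finset.sum_sub_distrib, ← Finset.mul_sum, hssum,
      hDsum, Finset.sum_congr rfl fun i _ => hAxi i, Finset.sum_const]
    simp [hdd]
  rw [hexp, hqx, hqxi] at hmain
  -- L is PSD: dd ≥ μA * s
  have hLpsd : 0 ≤ x ⬝ᵥ L *ᵥ x := by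
    have := (posSemidef_lapMatrix ℝ G).dotProduct_mulVec_nonneg x
    simpa using this
  have hdge : μA * s ≤ dd := by
    have : L = D - A := rfl
    rw [this, Matrix.sub_mulVec, dotProduct_sub, hxAx] at hLpsd
    rw [hdd]
    linarith
  -- combine: μA ≤ (k-1) * (μL - μA)
  have hfinal : μA ≤ ((k:ℝ) - 1) * (μL - μA) := by
    have hk0 : (0:ℝ) < (k:ℝ) := by linarith
    have hr1 : (k:ℝ)^2 * (μL * s - dd) = (k:ℝ) * ((k:ℝ) * (μL * s - dd)) := by ring
    have step1 : (k:ℝ) * ((μL * s - dd) + μA * s) ≤ (k:ℝ) * ((k:ℝ) * (μL * s - dd)) := by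
      rw [← hr1]; linarith [hmain]
    have step2 : (μL * s - dd) + μA * s ≤ (k:ℝ) * (μL * s - dd) :=
      le_of_mul_le_mul_left step1 hk0
    have hr2 : ((k:ℝ) - 1) * (μL * s - dd) = (k:ℝ) * (μL * s - dd) - (μL * s - dd) := by ring
    have step3 : μA * s ≤ ((k:ℝ) - 1) * (μL * s - dd) := by rw [hr2]; linarith
    have hr3 : (μL - μA) * s = μL * s - μA * s := by ring
    have step4 : μL * s - dd ≤ (μL - μA) * s := by rw [hr3]; linarith [hdge]
    have step5 : μA * s ≤ ((k:ℝ) - 1) * ((μL - μA) * s) :=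
      step3.trans (mul_le_mul_of_nonneg_left step4 (by linarith))
    have hr4 : ((k:ℝ) - 1) * ((μL - μA) * s) = (((k:ℝ) - 1) * (μL - μA)) * s := by ring
    rw [hr4] at step5
    exact le_of_mul_le_mul_right step5 hs0
  have hdenpos : 0 < μL - μA := by
    by_contra h
    push_neg at h
    nlinarith [hfinal]
  have hdiv : μA / (μL - μA) ≤ (k:ℝ) - 1 := (div_le_iff₀ hdenpos).mpr (by linarith [hfinal])
  rw [ge_iff_le]
  linarith
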